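/- Let M ≥ 2, let v ∈ ℂ^M have all entries of unit modulus, and let g ∈ ℝ^M. Define the mean ḡ = (1/M)∑_{m=1}^M g_m, the centered vector g̃ = g − ḡ·𝟙 (𝟙 ∈ ℝ^M the all-ones vector), the diagonal matrices D = diag(g) and D̃ = diag(g̃), and u = D̃ v ∈ ℂ^M. Then v*u = 0 and D v v* − v v* D = u v* − v u*, where * denotes conjugate transpose. -/

import Mathlib

open Matrix

/-- For `v ∈ ℂ^M` with unit-modulus entries and `g ∈ ℝ^M`, setting
`ḡ = (1/M)∑ g m`, `g̃ = g − ḡ𝟙`, `D = diag g`, `D̃ = diag g̃` and `u = D̃ v`,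
we have `v* u = 0` and `D v v* − v v* D = u v* − v u*`. -/
theorem commutator_decomposition
    (M : ℕ) (hM : 2 ≤ M) (v : Fin M → ℂ) (hv : ∀ m, ‖v m‖ = 1)
    (g : Fin M → ℝ)
    (gbar : ℝ) (hgbar : gbar = (∑ m, g m) / M)
    (gt : Fin M → ℝ) (hgt : ∀ m, gt m = g m - gbar)
    (D Dt : Matrix (Fin M) (Fin M) ℂ)
    (hD : D = Matrix.diagonal fun m => (g m : ℂ))
    (hDt : Dt = Matrix.diagonal fun m => (gt m : ℂ))
    (u : Fin M → ℂ) (hu : u = Dt.mulVec v) :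
    star v ⬝ᵥ u = 0 ∧
    D * vecMulVec v (star v) - vecMulVec v (star v) * D
      = vecMulVec u (star v) - vecMulVec v (star u) := by
  have hvv : ∀ m, (starRingEnd ℂ) (v m) * v m = 1 := by
    intro m
    rw [mul_comm, Complex.mul_conj]
    norm_cast
    have := hv m
    rw [Complex.normSq_eq_norm_sq, this]; norm_num
  have hum : ∀ m, u m = (gt m : ℂ) * v m := by
    intro m; simp [hu, hDt, Matrix.mulVec_diagonal]
  constructor
  · have h1 : star v ⬝ᵥ u = ∑ m, (gt m : ℂ) := by
      simp only [dotProduct, Pi.star_apply]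
      congr 1; funext m
      rw [hum m]
      calc (star (v m)) * ((gt m : ℂ) * v m)
          = (gt m : ℂ) * ((starRingEnd ℂ) (v m) * v m) := by
            rw [show star (v m) = (starRingEnd ℂ) (v m) from rfl]; ring
        _ = (gt m : ℂ) := by rw [hvv m, mul_one]
    rw [h1]
    have h2 : ∑ m, (gt m : ℂ) = ((∑ m, gt m : ℝ) : ℂ) := by push_cast; ring
    rw [h2]
    have h3 : ∑ m, gt m = 0 := by
      have hM0 : (M:ℝ) ≠ 0 := by positivity
      simp only [hgt, Finset.sum_sub_distrib, Finset.sum_const, Finset.card_univ,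
        Fintype.card_fin, nsmul_eq_mul, hgbar]
      field_simp
      ring
    simp [h3]
  · ext i j
    simp only [hD, Matrix.sub_apply, Matrix.diagonal_mul, Matrix.mul_diagonal,
      vecMulVec_apply, Pi.star_apply, hum, hgt, star_mul', star_sub, Complex.star_def, Complex.conj_ofReal]
    push_cast
    ring
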